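/- With λ₁ = 16π²/3, λ₂ = 112π²/9, ν₁ = (4√3/3)·b·(−8π²/3), and ν₂ = (4√3/3)·(−59049 − 22400bπ²)/3600, the expression (ν₂λ₁ − ν₁λ₂)/λ₁² equals −(4√3/3)·19683/(6400π²), independently of b, and this value is at most −0.719632. -/
import Mathlib


open Real

/-- First-order derivative of the fundamental ratio of the equilateral triangle:
with `λ₁ = 16π²/3`, `λ₂ = 112π²/9`, `ν₁ = (4√3/3)·b·(−8π²/3)` and
`ν₂ = (4√3/3)·(−59049 − 22400bπ²)/3600`, the quantity `(ν₂λ₁ − ν₁λ₂)/λ₁²`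
equals `−(4√3/3)·19683/(6400π²)`, independently of `b`, and is at most `−0.719632`. -/
theorem first_order_perturbation_ratio (b lam1 lam2 nu1 nu2 : ℝ)
    (h1 : lam1 = 16 * π ^ 2 / 3) (h2 : lam2 = 112 * π ^ 2 / 9)
    (hn1 : nu1 = (4 * Real.sqrt 3 / 3) * b * (-(8 * π ^ 2) / 3))
    (hn2 : nu2 = (4 * Real.sqrt 3 / 3) * (-59049 - 22400 * b * π ^ 2) / 3600) :
    (nu2 * lam1 - nu1 * lam2) / lam1 ^ 2 =
      -((4 * Real.sqrt 3 / 3) * 19683 / (6400 * π ^ 2)) ∧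
    -((4 * Real.sqrt 3 / 3) * 19683 / (6400 * π ^ 2)) ≤ -0.719632 := by
  have hpi : (0:ℝ) < π := Real.pi_pos
  have hpi2 : π ^ 2 ≠ 0 := pow_ne_zero 2 (ne_of_gt hpi)
  have hs3 : Real.sqrt 3 ^ 2 = 3 := Real.sq_sqrt (by norm_num)
  have hs3pos : (0:ℝ) < Real.sqrt 3 := Real.sqrt_pos.mpr (by norm_num)
  constructor
  · subst h1 h2 hn1 hn2
    field_simp
    ring
  · have hsl : Real.sqrt 3 > 1.7320508 := by nlinarith [hs3, hs3pos]
    have hpu : π < 3.141593 := Real.pi_lt_d6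
    rw [neg_le_neg_iff, le_div_iff₀ (by positivity)]
    nlinarith [hsl, hpu, hpi]
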